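/- Let (φₙ)_{n ≥ 1} be any family of order-n grid enumerations such that for every n: (i) any two consecutive cells φₙ(j), φₙ(j+1) are king-adjacent; and (ii) for all j < 4^{n+1}, integer division of both coordinates of φ_{n+1}(j) by 2 yields φₙ(⌊j/4⌋) (nesting condition). Then there exists a continuous map f : [0,1] → ℝ² such that for every n and every j < 4^n, f maps the subinterval [j/4^n, (j+1)/4^n] into the subsquare S(n, φₙ(j)), and f is surjective onto the unit square [0,1] × [0,1]. In particular, every nested king-adjacent family (including all HHC and HHCK families) induces a space-filling curve. -/

import Mathlib

/-- An order-`n` grid enumeration: a bijection between `Fin (4^n)` and the cells of the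
`2^n × 2^n` grid; cell `(a,b)` represents the subsquare with lower-left corner
`(a/2^n, b/2^n)`. -/
abbrev GridEnum (n : ℕ) := Fin (4 ^ n) ≃ Fin (2 ^ n) × Fin (2 ^ n)

/-- Two grid cells are edge-adjacent if their coordinates (as integers) satisfy
`|a − a'| + |b − b'| = 1`. -/
def edgeAdj {m : ℕ} (c d : Fin m × Fin m) : Prop :=
  |((c.1 : ℕ) : ℤ) - ((d.1 : ℕ) : ℤ)| + |((c.2 : ℕ) : ℤ) - ((d.2 : ℕ) : ℤ)| = 1

/-- Two grid cells are king-adjacent if their coordinates (as integers) satisfy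
`max (|a − a'|) (|b − b'|) = 1`. -/
def kingAdj {m : ℕ} (c d : Fin m × Fin m) : Prop :=
  max |((c.1 : ℕ) : ℤ) - ((d.1 : ℕ) : ℤ)| |((c.2 : ℕ) : ℤ) - ((d.2 : ℕ) : ℤ)| = 1

/-- Adjacency condition: any two consecutive cells of the enumeration are edge-adjacent. -/
def ConsecEdgeAdj {n : ℕ} (φ : GridEnum n) : Prop :=
  ∀ (j : ℕ) (h : j + 1 < 4 ^ n), edgeAdj (φ ⟨j, Nat.lt_of_succ_lt h⟩) (φ ⟨j + 1, h⟩)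

/-- Any two consecutive cells of the enumeration are king-adjacent. -/
def ConsecKingAdj {n : ℕ} (φ : GridEnum n) : Prop :=
  ∀ (j : ℕ) (h : j + 1 < 4 ^ n), kingAdj (φ ⟨j, Nat.lt_of_succ_lt h⟩) (φ ⟨j + 1, h⟩)

/-- Endpoint condition: the enumeration starts at the lower-left cell `(0,0)` and ends
at the lower-right cell `(2^n − 1, 0)`. -/
def EndpointCond {n : ℕ} (φ : GridEnum n) : Prop :=
  φ ⟨0, by positivity⟩ = (⟨0, by positivity⟩, ⟨0, by positivity⟩) ∧
  φ ⟨4 ^ n - 1, Nat.sub_lt (by positivity) Nat.one_pos⟩ =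
    (⟨2 ^ n - 1, Nat.sub_lt (by positivity) Nat.one_pos⟩, ⟨0, by positivity⟩)

/-- Nesting condition: integer division of both coordinates of `φₙ₊₁ j` by 2 yields
`φₙ ⌊j/4⌋`. -/
def Nests {n : ℕ} (φn : GridEnum n) (φn1 : GridEnum (n + 1)) : Prop :=
  ∀ j : Fin (4 ^ (n + 1)),
    ((φn1 j).1 : ℕ) / 2 =
      ((φn ⟨(j : ℕ) / 4, by
        have hj : (j : ℕ) < 4 ^ n * 4 := by simpa [pow_succ] using j.isLt
        omega⟩).1 : ℕ) ∧
    ((φn1 j).2 : ℕ) / 2 =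
      ((φn ⟨(j : ℕ) / 4, by
        have hj : (j : ℕ) < 4 ^ n * 4 := by simpa [pow_succ] using j.isLt
        omega⟩).2 : ℕ)

/-- The unit square `[0,1] × [0,1]` in the plane `ℝ²`. -/
def unitSquare : Set (ℝ × ℝ) := Set.Icc (0 : ℝ) 1 ×ˢ Set.Icc (0 : ℝ) 1

/-- The subsquare `[a/2^n, (a+1)/2^n] × [b/2^n, (b+1)/2^n]` associated to the grid
cell `(a,b)` at order `n`. -/
noncomputable def subSquare (n : ℕ) (c : Fin (2 ^ n) × Fin (2 ^ n)) : Set (ℝ × ℝ) :=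
  Set.Icc (((c.1 : ℕ) : ℝ) / 2 ^ n) ((((c.1 : ℕ) : ℝ) + 1) / 2 ^ n) ×ˢ
    Set.Icc (((c.2 : ℕ) : ℝ) / 2 ^ n) ((((c.2 : ℕ) : ℝ) + 1) / 2 ^ n)

/-- index of the level-`n` subinterval containing `t` (clamped). -/
noncomputable def sfcJ (n : ℕ) (t : ℝ) : ℕ := min ⌊t * 4 ^ n⌋₊ (4 ^ n - 1)

lemma sfcJ_lt (n : ℕ) (t : ℝ) : sfcJ n t < 4 ^ n :=
  lt_of_le_of_lt (min_le_right _ _) (Nat.sub_lt (by positivity) one_pos)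

lemma sfcJ_succ_div (n : ℕ) (t : ℝ) : sfcJ (n + 1) t / 4 = sfcJ n t := by
  have h1 : ⌊t * 4 ^ (n + 1)⌋₊ / 4 = ⌊t * 4 ^ n⌋₊ := by
    have : t * 4 ^ n = t * 4 ^ (n + 1) / ((4 : ℕ) : ℝ) := by
      push_cast; rw [pow_succ]; ring
    rw [this, Nat.floor_div_natCast]
  have h2 : 1 ≤ 4 ^ n := Nat.one_le_pow _ _ (by norm_num)
  have h3 : (4 : ℕ) ^ (n + 1) = 4 * 4 ^ n := by rw [pow_succ]; ring
  unfold sfcJ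
  omega

lemma sfcJ_mono (n : ℕ) {t t' : ℝ} (h : t ≤ t') : sfcJ n t ≤ sfcJ n t' :=
  min_le_min (Nat.floor_le_floor (by nlinarith [pow_pos (by norm_num : (0:ℝ) < 4) n])) le_rfl

lemma sfcJ_le_succ {n : ℕ} {t t' : ℝ} (h : t' ≤ t + ((4 : ℝ) ^ n)⁻¹) :
    sfcJ n t' ≤ sfcJ n t + 1 := by
  have h4 : (0 : ℝ) < 4 ^ n := by positivity
  have hx : t' * 4 ^ n ≤ t * 4 ^ n + 1 := by
    have := mul_le_mul_of_nonneg_right h h4.le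
    rw [add_mul, inv_mul_cancel₀ (ne_of_gt h4)] at this
    linarith
  have hfl : ⌊t' * 4 ^ n⌋₊ ≤ ⌊t * 4 ^ n⌋₊ + 1 := by
    rcases le_or_gt 0 (t * 4 ^ n) with hpos | hneg
    · calc ⌊t' * 4 ^ n⌋₊ ≤ ⌊t * 4 ^ n + 1⌋₊ := Nat.floor_le_floor hx
        _ = ⌊t * 4 ^ n⌋₊ + 1 := Nat.floor_add_one hpos
    · have hx1 : t' * 4 ^ n < 1 := by linarith
      have : ⌊t' * 4 ^ n⌋₊ = 0 := Nat.floor_eq_zero.2 hx1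
      omega
  unfold sfcJ; omega

lemma sfc_abs_sub_le {n : ℕ} {a b : ℕ} (hab : (a : ℤ) ≤ b + 1) (hba : (b : ℤ) ≤ a + 1) {x y : ℝ}
    (hx : x ∈ Set.Icc ((a : ℝ) / 2 ^ n) (((a : ℝ) + 1) / 2 ^ n))
    (hy : y ∈ Set.Icc ((b : ℝ) / 2 ^ n) (((b : ℝ) + 1) / 2 ^ n)) : |x - y| ≤ 2 / 2 ^ n := by
  have hp : (0 : ℝ) < 2 ^ n := by positivity
  have h1 : (a : ℝ) ≤ (b : ℝ) + 1 := by exact_mod_cast hab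
  have h2 : (b : ℝ) ≤ (a : ℝ) + 1 := by exact_mod_cast hba
  obtain ⟨hx1, hx2⟩ := hx
  obtain ⟨hy1, hy2⟩ := hy
  have key : ∀ u v : ℝ, u ≤ v + 1 → (u + 1) / 2 ^ n - v / 2 ^ n ≤ 2 / 2 ^ n := by
    intro u v h
    have heq : (u + 1) / 2 ^ n - v / 2 ^ n = (u + 1 - v) / 2 ^ n := by ring
    rw [heq]
    gcongr
    linarith
  rw [abs_le]
  constructor
  · have := key b a h2; linarith
  · have := key a b h1; linarith

lemma sfc_dist_bound {n : ℕ} {c d : Fin (2 ^ n) × Fin (2 ^ n)}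
    (h1 : |((c.1 : ℕ) : ℤ) - ((d.1 : ℕ) : ℤ)| ≤ 1) (h2 : |((c.2 : ℕ) : ℤ) - ((d.2 : ℕ) : ℤ)| ≤ 1)
    {p q : ℝ × ℝ} (hp : p ∈ subSquare n c) (hq : q ∈ subSquare n d) :
    dist p q ≤ 2 / 2 ^ n := by
  rw [abs_le] at h1 h2
  obtain ⟨hp1, hp2⟩ := hp
  obtain ⟨hq1, hq2⟩ := hq
  rw [Prod.dist_eq, sup_le_iff]
  constructor
  · rw [Real.dist_eq]; exact sfc_abs_sub_le (by omega) (by omega) hp1 hq1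
  · rw [Real.dist_eq]; exact sfc_abs_sub_le (by omega) (by omega) hp2 hq2

lemma sfc_subSquare_nested {n : ℕ} {c : Fin (2 ^ (n + 1)) × Fin (2 ^ (n + 1))}
    {d : Fin (2 ^ n) × Fin (2 ^ n)}
    (h1 : (c.1 : ℕ) / 2 = (d.1 : ℕ)) (h2 : (c.2 : ℕ) / 2 = (d.2 : ℕ)) :
    subSquare (n + 1) c ⊆ subSquare n d := by
  have key : ∀ a b : ℕ, a / 2 = b →
      Set.Icc ((a : ℝ) / 2 ^ (n + 1)) (((a : ℝ) + 1) / 2 ^ (n + 1)) ⊆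
        Set.Icc ((b : ℝ) / 2 ^ n) (((b : ℝ) + 1) / 2 ^ n) := by
    intro a b hab
    have hp : (0 : ℝ) < 2 ^ n := by positivity
    apply Set.Icc_subset_Icc
    · rw [div_le_div_iff₀ (by positivity) (by positivity)]
      have hle : 2 * b ≤ a := by omega
      have hle' : (2 : ℝ) * b ≤ a := by exact_mod_cast hle
      rw [pow_succ]; nlinarith
    · rw [div_le_div_iff₀ (by positivity) (by positivity)]
      have hle : a + 1 ≤ 2 * b + 2 := by omega
      have hle' : (a : ℝ) + 1 ≤ 2 * b + 2 := by exact_mod_cast hle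
      rw [pow_succ]; nlinarith
  exact Set.prod_mono (key _ _ h1) (key _ _ h2)

lemma sfc_subSquare_subset_unit (n : ℕ) (c : Fin (2 ^ n) × Fin (2 ^ n)) :
    subSquare n c ⊆ unitSquare := by
  have key : ∀ a : ℕ, a < 2 ^ n →
      Set.Icc ((a : ℝ) / 2 ^ n) (((a : ℝ) + 1) / 2 ^ n) ⊆ Set.Icc (0 : ℝ) 1 := by
    intro a ha
    apply Set.Icc_subset_Icc
    · positivity
    · rw [div_le_one (by positivity)]
      have : (a : ℝ) + 1 ≤ ((2 ^ n : ℕ) : ℝ) := by exact_mod_cast ha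
      push_cast at this ⊢
      linarith
  exact Set.prod_mono (key _ c.1.isLt) (key _ c.2.isLt)

lemma sfc_isClosed (n : ℕ) (c : Fin (2 ^ n) × Fin (2 ^ n)) : IsClosed (subSquare n c) :=
  IsClosed.prod isClosed_Icc isClosed_Icc

/-- the lower-left corner of a subsquare. -/
noncomputable def sfcCorner (n : ℕ) (c : Fin (2 ^ n) × Fin (2 ^ n)) : ℝ × ℝ :=
  (((c.1 : ℕ) : ℝ) / 2 ^ n, ((c.2 : ℕ) : ℝ) / 2 ^ n)

lemma sfcCorner_mem (n : ℕ) (c : Fin (2 ^ n) × Fin (2 ^ n)) : sfcCorner n c ∈ subSquare n c := by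
  have hp : (0 : ℝ) < 2 ^ n := by positivity
  refine ⟨⟨le_refl _, ?_⟩, le_refl _, ?_⟩ <;>
    · show _ / (2:ℝ) ^ n ≤ _ / 2 ^ n
      rw [div_le_div_iff₀ hp hp]; nlinarith

lemma sfc_grid {m : ℕ} {x : ℝ} (h0 : 0 ≤ x) (h1 : x ≤ 1) :
    ((min ⌊x * 2 ^ m⌋₊ (2 ^ m - 1) : ℕ) : ℝ) / 2 ^ m ≤ x ∧
      x ≤ (((min ⌊x * 2 ^ m⌋₊ (2 ^ m - 1) : ℕ) : ℝ) + 1) / 2 ^ m := by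
  have hp : (0 : ℝ) < 2 ^ m := by positivity
  have hM : 1 ≤ 2 ^ m := Nat.one_le_two_pow
  have hx0 : 0 ≤ x * 2 ^ m := by positivity
  constructor
  · rw [div_le_iff₀ hp]
    calc ((min ⌊x * 2 ^ m⌋₊ (2 ^ m - 1) : ℕ) : ℝ) ≤ (⌊x * 2 ^ m⌋₊ : ℝ) := by
          exact_mod_cast min_le_left _ _
      _ ≤ x * 2 ^ m := Nat.floor_le hx0
  · rw [le_div_iff₀ hp]
    rcases le_or_gt (⌊x * 2 ^ m⌋₊) (2 ^ m - 1) with hc | hc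
    · rw [min_eq_left hc]
      have := Nat.lt_floor_add_one (x * 2 ^ m)
      linarith
    · rw [min_eq_right hc.le]
      have hcast : ((2 ^ m - 1 : ℕ) : ℝ) + 1 = ((2 ^ m : ℕ) : ℝ) := by
        rw [Nat.cast_sub hM]; push_cast; ring
      rw [hcast]
      push_cast
      nlinarith

open Filter

/-- Every nested king-adjacent family of grid enumerations (in particular every HHC and
HHCK family) induces a space-filling curve: a continuous map on `[0,1]` carrying each
subinterval `[j/4^n, (j+1)/4^n]` into the subsquare `S(n, φₙ j)` and surjective onto
the unit square. -/
theorem nested_family_induces_space_filling_curve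
    (φ : ∀ n : ℕ, GridEnum n)
    (hadj : ∀ n : ℕ, 1 ≤ n → ConsecKingAdj (φ n))
    (hnest : ∀ n : ℕ, 1 ≤ n → Nests (φ n) (φ (n + 1))) :
    ∃ f : ℝ → ℝ × ℝ, ContinuousOn f (Set.Icc 0 1) ∧
      (∀ n : ℕ, 1 ≤ n → ∀ j : Fin (4 ^ n),
        Set.MapsTo f (Set.Icc (((j : ℕ) : ℝ) / 4 ^ n) ((((j : ℕ) : ℝ) + 1) / 4 ^ n))
          (subSquare n (φ n j))) ∧
      f '' Set.Icc 0 1 = unitSquare := by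
  classical
  -- helper: small bounds
  have hsmall : ∀ ε : ℝ, 0 < ε → ∃ N : ℕ, (2 : ℝ) / 2 ^ (N + 1) < ε := by
    intro ε hε
    obtain ⟨N, hN⟩ := exists_pow_lt_of_lt_one hε (by norm_num : (1 : ℝ) / 2 < 1)
    refine ⟨N, ?_⟩
    have h1 : ((1 : ℝ) / 2) ^ N = 1 / 2 ^ N := by rw [div_pow, one_pow]
    have h2 : (2 : ℝ) / 2 ^ (N + 1) = 1 / 2 ^ N := by
      rw [pow_succ, mul_comm, ← div_div]; norm_num
    rw [h2, ← h1]; exact hN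
  -- the approximating sequence of cells and corners
  have hStep : ∀ (N : ℕ) (t : ℝ),
      subSquare (N + 2) (φ (N + 2) ⟨sfcJ (N + 2) t, sfcJ_lt _ _⟩) ⊆
        subSquare (N + 1) (φ (N + 1) ⟨sfcJ (N + 1) t, sfcJ_lt _ _⟩) := by
    intro N t
    have hfin : (⟨(⟨sfcJ (N + 2) t, sfcJ_lt _ _⟩ : Fin (4 ^ (N + 2))).val / 4, by
          have hj : ((⟨sfcJ (N + 2) t, sfcJ_lt _ _⟩ : Fin (4 ^ (N + 2))) : ℕ) < 4 ^ (N + 1) * 4 := by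
            simpa [pow_succ] using sfcJ_lt (N + 2) t
          omega⟩ : Fin (4 ^ (N + 1))) = ⟨sfcJ (N + 1) t, sfcJ_lt _ _⟩ :=
      Fin.ext (sfcJ_succ_div _ _)
    have ha := (hnest (N + 1) (Nat.le_add_left 1 N) ⟨sfcJ (N + 2) t, sfcJ_lt _ _⟩).1
    have hb := (hnest (N + 1) (Nat.le_add_left 1 N) ⟨sfcJ (N + 2) t, sfcJ_lt _ _⟩).2
    refine sfc_subSquare_nested ?_ ?_
    · exact ha.trans (congrArg (fun z : Fin (4 ^ (N + 1)) => ((φ (N + 1) z).1 : ℕ)) hfin)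
    · exact hb.trans (congrArg (fun z : Fin (4 ^ (N + 1)) => ((φ (N + 1) z).2 : ℕ)) hfin)
  have hChain : ∀ (t : ℝ) (N M : ℕ), N ≤ M →
      subSquare (M + 1) (φ (M + 1) ⟨sfcJ (M + 1) t, sfcJ_lt _ _⟩) ⊆
        subSquare (N + 1) (φ (N + 1) ⟨sfcJ (N + 1) t, sfcJ_lt _ _⟩) := by
    intro t N M h
    induction M, h using Nat.le_induction with
    | base => exact subset_rfl
    | succ m hm ih => exact (hStep m t).trans ih
  set F : ℕ → ℝ → ℝ × ℝ :=
    fun N t => sfcCorner (N + 1) (φ (N + 1) ⟨sfcJ (N + 1) t, sfcJ_lt _ _⟩) with hFdef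
  have hFmem : ∀ (t : ℝ) (N M : ℕ), N ≤ M →
      F M t ∈ subSquare (N + 1) (φ (N + 1) ⟨sfcJ (N + 1) t, sfcJ_lt _ _⟩) :=
    fun t N M h => hChain t N M h (sfcCorner_mem _ _)
  have hCauchy : ∀ t : ℝ, CauchySeq (fun N => F N t) := by
    intro t
    rw [Metric.cauchySeq_iff']
    intro ε hε
    obtain ⟨N, hN⟩ := hsmall ε hε
    refine ⟨N, fun m hm => lt_of_le_of_lt ?_ hN⟩
    exact sfc_dist_bound (by simp) (by simp) (hFmem t N m hm) (hFmem t N N le_rfl)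
  set f : ℝ → ℝ × ℝ := fun t => limUnder atTop (fun N => F N t) with hfdef
  have hlim : ∀ t : ℝ, Tendsto (fun N => F N t) atTop (nhds (f t)) :=
    fun t => (hCauchy t).tendsto_limUnder
  have hfS : ∀ (t : ℝ) (N : ℕ),
      f t ∈ subSquare (N + 1) (φ (N + 1) ⟨sfcJ (N + 1) t, sfcJ_lt _ _⟩) := by
    intro t N
    exact (sfc_isClosed _ _).mem_of_tendsto (hlim t)
      (Filter.eventually_atTop.2 ⟨N, fun m hm => hFmem t N m hm⟩)
  -- key closeness estimate
  have hkey : ∀ (N : ℕ) (s u : ℝ), s ≤ u → u ≤ s + ((4 : ℝ) ^ (N + 1))⁻¹ →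
      dist (f s) (f u) ≤ 2 / 2 ^ (N + 1) := by
    intro N s u hsu hclose
    have h1 : sfcJ (N + 1) s ≤ sfcJ (N + 1) u := sfcJ_mono (N + 1) hsu
    have h2 : sfcJ (N + 1) u ≤ sfcJ (N + 1) s + 1 := sfcJ_le_succ hclose
    have habs : |((φ (N + 1) ⟨sfcJ (N + 1) s, sfcJ_lt _ _⟩).1 : ℤ) -
          ((φ (N + 1) ⟨sfcJ (N + 1) u, sfcJ_lt _ _⟩).1 : ℤ)| ≤ 1 ∧
        |((φ (N + 1) ⟨sfcJ (N + 1) s, sfcJ_lt _ _⟩).2 : ℤ) -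
          ((φ (N + 1) ⟨sfcJ (N + 1) u, sfcJ_lt _ _⟩).2 : ℤ)| ≤ 1 := by
      rcases eq_or_lt_of_le h1 with heq | hlt
      · have hfin : (⟨sfcJ (N + 1) s, sfcJ_lt _ _⟩ : Fin (4 ^ (N + 1))) =
            ⟨sfcJ (N + 1) u, sfcJ_lt _ _⟩ := Fin.ext heq
        rw [hfin]; simp
      · have hb : sfcJ (N + 1) u = sfcJ (N + 1) s + 1 := by omega
        have hlt4 : sfcJ (N + 1) s + 1 < 4 ^ (N + 1) := hb ▸ sfcJ_lt (N + 1) u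
        have hk := hadj (N + 1) (Nat.le_add_left 1 N) (sfcJ (N + 1) s) hlt4
        unfold kingAdj at hk
        have hfin : (⟨sfcJ (N + 1) u, sfcJ_lt _ _⟩ : Fin (4 ^ (N + 1))) =
            ⟨sfcJ (N + 1) s + 1, hlt4⟩ := Fin.ext hb
        rw [hfin]
        exact ⟨le_of_le_of_eq (le_max_left _ _) hk, le_of_le_of_eq (le_max_right _ _) hk⟩
    exact sfc_dist_bound habs.1 habs.2 (hfS s N) (hfS u N)
  -- continuity
  have hcont : Continuous f := by
    rw [Metric.continuous_iff]
    intro x ε hε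
    obtain ⟨N, hN⟩ := hsmall ε hε
    refine ⟨((4 : ℝ) ^ (N + 1))⁻¹, by positivity, fun y hy => ?_⟩
    rw [Real.dist_eq] at hy
    rcases le_total y x with h | h
    · have hc : x ≤ y + ((4 : ℝ) ^ (N + 1))⁻¹ := by
        have := le_abs_self (x - y)
        rw [abs_sub_comm] at hy
        linarith
      have := hkey N y x h hc
      linarith
    · have hc : y ≤ x + ((4 : ℝ) ^ (N + 1))⁻¹ := by
        have := le_abs_self (y - x)
        linarith
      have := hkey N x y h hc
      rw [dist_comm] at this
      linarith
  -- maps-to property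
  have hmaps : ∀ n : ℕ, 1 ≤ n → ∀ j : Fin (4 ^ n),
      Set.MapsTo f (Set.Icc (((j : ℕ) : ℝ) / 4 ^ n) ((((j : ℕ) : ℝ) + 1) / 4 ^ n))
        (subSquare n (φ n j)) := by
    intro n hn j
    obtain ⟨k, rfl⟩ : ∃ k, n = k + 1 := ⟨n - 1, by omega⟩
    have h4 : (0 : ℝ) < 4 ^ (k + 1) := by positivity
    have hlt : ((j : ℕ) : ℝ) / 4 ^ (k + 1) < (((j : ℕ) : ℝ) + 1) / 4 ^ (k + 1) := by
      rw [div_lt_div_iff₀ h4 h4]; nlinarith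
    have hIco : Set.MapsTo f
        (Set.Ico (((j : ℕ) : ℝ) / 4 ^ (k + 1)) ((((j : ℕ) : ℝ) + 1) / 4 ^ (k + 1)))
        (subSquare (k + 1) (φ (k + 1) j)) := by
      intro t ht
      obtain ⟨ht1, ht2⟩ := ht
      have ht0 : (0 : ℝ) ≤ t := le_trans (by positivity) ht1
      have hfl : ⌊t * 4 ^ (k + 1)⌋₊ = (j : ℕ) := by
        rw [Nat.floor_eq_iff (by positivity)]
        constructor
        · rw [div_le_iff₀ h4] at ht1; exact ht1
        · rw [lt_div_iff₀ h4] at ht2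
          calc t * 4 ^ (k + 1) < ((j : ℕ) : ℝ) + 1 := ht2
            _ = ((j : ℕ) : ℝ) + 1 := rfl
      have hJ : sfcJ (k + 1) t = (j : ℕ) := by
        unfold sfcJ; rw [hfl]; have := j.isLt; omega
      have hmem := hfS t k
      have hfin : (⟨sfcJ (k + 1) t, sfcJ_lt _ _⟩ : Fin (4 ^ (k + 1))) = j := Fin.ext hJ
      rwa [hfin] at hmem
    have hclosure := hIco.closure hcont
    rwa [closure_Ico (ne_of_lt hlt), (sfc_isClosed _ _).closure_eq] at hclosure
  refine ⟨f, hcont.continuousOn, hmaps, ?_⟩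
  apply Set.Subset.antisymm
  · rintro p ⟨t, _, rfl⟩
    exact sfc_subSquare_subset_unit _ _ (hfS t 0)
  · have hclosedimg : IsClosed (f '' Set.Icc 0 1) := (isCompact_Icc.image hcont).isClosed
    intro q hq
    rw [← hclosedimg.closure_eq, Metric.mem_closure_iff]
    intro ε hε
    obtain ⟨N, hN⟩ := hsmall ε hε
    obtain ⟨⟨hx0, hx1⟩, hy0, hy1⟩ := hq
    have haM : min ⌊q.1 * 2 ^ (N + 1)⌋₊ (2 ^ (N + 1) - 1) < 2 ^ (N + 1) :=
      lt_of_le_of_lt (min_le_right _ _) (Nat.sub_lt (by positivity) one_pos)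
    have hbM : min ⌊q.2 * 2 ^ (N + 1)⌋₊ (2 ^ (N + 1) - 1) < 2 ^ (N + 1) :=
      lt_of_le_of_lt (min_le_right _ _) (Nat.sub_lt (by positivity) one_pos)
    set c : Fin (2 ^ (N + 1)) × Fin (2 ^ (N + 1)) :=
      (⟨min ⌊q.1 * 2 ^ (N + 1)⌋₊ (2 ^ (N + 1) - 1), haM⟩,
       ⟨min ⌊q.2 * 2 ^ (N + 1)⌋₊ (2 ^ (N + 1) - 1), hbM⟩) with hcdef
    have hqmem : q ∈ subSquare (N + 1) c :=
      ⟨⟨(sfc_grid hx0 hx1).1, (sfc_grid hx0 hx1).2⟩, (sfc_grid hy0 hy1).1, (sfc_grid hy0 hy1).2⟩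
    set j : Fin (4 ^ (N + 1)) := (φ (N + 1)).symm c with hjdef
    set t : ℝ := ((j : ℕ) : ℝ) / 4 ^ (N + 1) with htdef
    have h4 : (0 : ℝ) < 4 ^ (N + 1) := by positivity
    have ht01 : t ∈ Set.Icc (0 : ℝ) 1 := by
      constructor
      · positivity
      · rw [htdef, div_le_one h4]
        have : ((j : ℕ) : ℝ) ≤ ((4 ^ (N + 1) : ℕ) : ℝ) := by exact_mod_cast j.isLt.le
        push_cast at this ⊢
        linarith
    have htmem : t ∈ Set.Icc (((j : ℕ) : ℝ) / 4 ^ (N + 1)) ((((j : ℕ) : ℝ) + 1) / 4 ^ (N + 1)) := by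
      refine ⟨le_refl _, ?_⟩
      rw [htdef, div_le_div_iff₀ h4 h4]; nlinarith
    have hft := hmaps (N + 1) (Nat.le_add_left 1 N) j htmem
    rw [hjdef, Equiv.apply_symm_apply] at hft
    refine ⟨f t, Set.mem_image_of_mem f ht01, ?_⟩
    calc dist q (f t) ≤ 2 / 2 ^ (N + 1) := sfc_dist_bound (by simp) (by simp) hqmem hft
      _ < ε := hN
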